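/- Let R = ⊕_{i=1}^{p} M_{n_i,m_i}(ℂ) and S = ⊕_{j=1}^{q} M_{k_j,l_j}(ℂ) be finite direct sums of rectangular matrix spaces and let φ : R → S be a TRO-morphism (with respect to the componentwise ternary product x y* z). For each j let φ^j : R → M_{k_j,l_j}(ℂ) denote the j-th component of φ. Then there exists a q×p matrix (α_{j,i}) of natural numbers with Σ_{i=1}^{p} α_{j,i} n_i ≤ k_j and Σ_{i=1}^{p} α_{j,i} m_i ≤ l_j for every j, and for every j there exist unitary matrices U_j ∈ M_{k_j}(ℂ) and V_j ∈ M_{l_j}(ℂ) such that φ^j(A_1,…,A_p) = U_j · ((diag_{α_{j,1}}(A_1) ⊕ diag_{α_{j,2}}(A_2) ⊕ ⋯ ⊕ diag_{α_{j,p}}(A_p)) ⊕ 0) · V_j for all (A_1,…,A_p) ∈ R, where the inner expression is the block-diagonal matrix with diagonal blocks diag_{α_{j,i}}(A_i) padded by zeros to size k_j×l_j. -/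

import Mathlib

open Matrix

/-- The `N × M` matrix having the block-diagonal matrix `diag_k(A)` (built from `k`
copies of the `n × m` matrix `A`) as a block whose top-left corner sits at row `r`
and column `c`, and zeros elsewhere. -/
noncomputable def diagPadAt {n m : ℕ} (N M r c k : ℕ) (A : Matrix (Fin n) (Fin m) ℂ) :
    Matrix (Fin N) (Fin M) ℂ := Matrix.of fun i j =>
  if h : r ≤ (i : ℕ) ∧ c ≤ (j : ℕ) ∧ ((i : ℕ) - r) % n < n ∧ ((j : ℕ) - c) % m < m ∧
      (i : ℕ) - r < k * n ∧ (j : ℕ) - c < k * m ∧ ((i : ℕ) - r) / n = ((j : ℕ) - c) / m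
  then A ⟨((i : ℕ) - r) % n, h.2.2.1⟩ ⟨((j : ℕ) - c) % m, h.2.2.2.1⟩ else 0

lemma star_dot_mulVec {K L : ℕ} (M N : Matrix (Fin K) (Fin L) ℂ) (u u' : Fin L → ℂ) :
    star (M *ᵥ u) ⬝ᵥ (N *ᵥ u') = star u ⬝ᵥ ((Mᴴ * N) *ᵥ u') := by
  rw [star_mulVec, ← dotProduct_mulVec, mulVec_mulVec]

lemma vecMulVec_mulVec' {K L : ℕ} (u : Fin K → ℂ) (s z : Fin L → ℂ) :
    vecMulVec u s *ᵥ z = (s ⬝ᵥ z) • u := by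
  ext a
  simp only [mulVec, dotProduct, vecMulVec_apply, Pi.smul_apply, smul_eq_mul, Finset.sum_mul]
  exact Finset.sum_congr rfl fun b _ => by ring

lemma mul_vecMulVec_mul {a b c d : ℕ} (M : Matrix (Fin a) (Fin b) ℂ) (u : Fin b → ℂ)
    (s : Fin c → ℂ) (N : Matrix (Fin c) (Fin d) ℂ) :
    M * vecMulVec u s * N = vecMulVec (M *ᵥ u) (s ᵥ* N) := by
  ext i j
  simp only [mul_apply, vecMulVec_apply, mulVec, vecMul, dotProduct, Finset.sum_mul,
    Finset.mul_sum]
  rw [Finset.sum_comm]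
  conv_rhs => rw [Finset.sum_comm]
  refine Finset.sum_congr rfl fun y _ => Finset.sum_congr rfl fun x _ => by ring

lemma stdBasisMatrix_conjT {n m : ℕ} (r : Fin n) (c : Fin m) :
    (Matrix.single r c (1:ℂ))ᴴ = Matrix.single c r 1 := by
  ext a b
  simp only [conjTranspose_apply, Matrix.single, of_apply]
  split_ifs with h1 h2 h2 <;> simp_all [and_comm]

lemma mul_vecMulVec_mul' {a b c d : ℕ} (M : Matrix (Fin a) (Fin b) ℂ) (u : Fin b → ℂ)
    (s : Fin c → ℂ) (N : Matrix (Fin c) (Fin d) ℂ) :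
    M * vecMulVec u s * N = vecMulVec (M *ᵥ u) (s ᵥ* N) := by
  ext i j
  simp only [mul_apply, vecMulVec_apply, mulVec, vecMul, dotProduct, Finset.sum_mul,
    Finset.mul_sum]
  rw [Finset.sum_comm]
  conv_rhs => rw [Finset.sum_comm]
  refine Finset.sum_congr rfl fun y _ => Finset.sum_congr rfl fun x _ => by ring

lemma herm_idem_decomp {L : ℕ} (Q : Matrix (Fin L) (Fin L) ℂ) (hH : Q.IsHermitian)
    (hI : Q * Q = Q) :
    ∃ (α : ℕ) (v : Fin α → Fin L → ℂ),
      (∀ s t, star (v s) ⬝ᵥ v t = if s = t then 1 else 0) ∧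
      Q = ∑ t, vecMulVec (v t) (star (v t)) := by
  classical
  have heig : ∀ c, hH.eigenvalues c = 0 ∨ hH.eigenvalues c = 1 := by
    intro c
    have h1 := hH.mulVec_eigenvectorBasis c
    have h2 : (Q * Q) *ᵥ ⇑(hH.eigenvectorBasis c) = Q *ᵥ ⇑(hH.eigenvectorBasis c) := by
      rw [hI]
    rw [← mulVec_mulVec, h1, mulVec_smul, h1, smul_smul] at h2
    have hb : (⇑(hH.eigenvectorBasis c) : Fin L → ℂ) ≠ 0 := by
      intro h0
      have := hH.eigenvectorBasis.orthonormal.1 c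
      rw [show (hH.eigenvectorBasis c : EuclideanSpace ℂ (Fin L)) = 0 from WithLp.ofLp_injective (p := 2) (V := Fin L → ℂ) h0] at this
      simp at this
    have h3 : (hH.eigenvalues c * hH.eigenvalues c - hH.eigenvalues c) •
        (⇑(hH.eigenvectorBasis c) : Fin L → ℂ) = 0 := by
      rw [sub_smul, h2, sub_self]
    rcases smul_eq_zero.mp h3 with h | h
    · have : hH.eigenvalues c * (hH.eigenvalues c - 1) = 0 := by ring_nf; linarith [h]
      rcases mul_eq_zero.mp this with h' | h'
      · exact Or.inl h'
      · exact Or.inr (by linarith)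
    · exact absurd h hb
  set S : Finset (Fin L) := Finset.univ.filter (fun c => hH.eigenvalues c = 1) with hS
  set U : Matrix (Fin L) (Fin L) ℂ := (hH.eigenvectorUnitary : Matrix (Fin L) (Fin L) ℂ) with hU
  have hdiag : diagonal (RCLike.ofReal ∘ hH.eigenvalues : Fin L → ℂ) =
      ∑ x ∈ S, Matrix.single x x (1:ℂ) := by
    ext i j
    rw [Matrix.sum_apply]
    by_cases hij : i = j
    · subst hij
      simp only [diagonal_apply_eq, Function.comp_apply, Matrix.single, of_apply, and_self]
      rw [Finset.sum_ite_eq' S i (fun _ => (1:ℂ))]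
      rcases heig i with h | h <;> simp [hS, h, RCLike.ofReal]
    · simp only [diagonal_apply_ne _ hij, Matrix.single, of_apply]
      rw [Finset.sum_eq_zero]
      intro x hx
      simp only [ite_eq_right_iff, and_imp]
      rintro rfl rfl; exact absurd rfl hij
  have hstar_single : ∀ x : Fin L, star (Pi.single x (1:ℂ) : Fin L → ℂ) = Pi.single x (1:ℂ) := by
    intro x; funext b
    by_cases hb : b = x <;> simp [Pi.single_apply, hb, apply_ite (star : ℂ → ℂ)]
  have hQsum : Q = ∑ x ∈ S,
      vecMulVec (⇑(hH.eigenvectorBasis x)) (star ⇑(hH.eigenvectorBasis x)) := by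
    conv_lhs => rw [hH.spectral_theorem, hdiag, Unitary.conjStarAlgAut_apply]
    rw [Finset.mul_sum, Finset.sum_mul]
    refine Finset.sum_congr rfl fun x _ => ?_
    have hcol : U *ᵥ Pi.single x 1 = ⇑(hH.eigenvectorBasis x) := hH.eigenvectorUnitary_mulVec x
    have hrow : Pi.single x (1:ℂ) ᵥ* Uᴴ = star ⇑(hH.eigenvectorBasis x) := by
      rw [← hstar_single x, ← star_mulVec, hcol]
    rw [Matrix.single_eq_single_vecMulVec_single, Matrix.star_eq_conjTranspose,
      mul_vecMulVec_mul', hcol, hrow]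
  refine ⟨S.card, fun t => ⇑(hH.eigenvectorBasis ((S.equivFin.symm t : S) : Fin L)), ?_, ?_⟩
  · intro s t
    have horth := hH.eigenvectorBasis.orthonormal
    rw [orthonormal_iff_ite] at horth
    have h2 := horth ((S.equivFin.symm s : S) : Fin L) ((S.equivFin.symm t : S) : Fin L)
    rw [EuclideanSpace.inner_eq_star_dotProduct, dotProduct_comm] at h2
    have hiff : (((S.equivFin.symm s : S) : Fin L) = ((S.equivFin.symm t : S) : Fin L)) ↔ s = t := by
      constructor
      · intro h; exact (Equiv.injective _) (Subtype.ext h)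
      · rintro rfl; rfl
    simpa only [hiff] using h2
  · have h3 : ∑ t : Fin S.card, vecMulVec
        (⇑(hH.eigenvectorBasis ((S.equivFin.symm t : S) : Fin L)))
        (star ⇑(hH.eigenvectorBasis ((S.equivFin.symm t : S) : Fin L))) = ∑ x ∈ S,
        vecMulVec (⇑(hH.eigenvectorBasis x)) (star ⇑(hH.eigenvectorBasis x)) := by
      rw [← Finset.sum_coe_sort S (fun x =>
        vecMulVec (⇑(hH.eigenvectorBasis (x : Fin L))) (star ⇑(hH.eigenvectorBasis (x : Fin L))))]
      exact Equiv.sum_comp S.equivFin.symm (fun x : S =>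
        vecMulVec (⇑(hH.eigenvectorBasis (x : Fin L))) (star ⇑(hH.eigenvectorBasis (x : Fin L))))
    exact hQsum.trans h3.symm

lemma orthonormal_of_dot {N : ℕ} {ι : Type*} [DecidableEq ι] (w : ι → Fin N → ℂ)
    (hw : ∀ σ τ, star (w σ) ⬝ᵥ w τ = if σ = τ then 1 else 0) :
    Orthonormal ℂ (fun σ => ((WithLp.equiv 2 (Fin N → ℂ)).symm (w σ) : EuclideanSpace ℂ (Fin N))) := by
  rw [orthonormal_iff_ite]
  intro σ τ
  rw [WithLp.equiv_symm_apply, EuclideanSpace.inner_toLp_toLp, dotProduct_comm]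
  exact hw σ τ

lemma card_le_of_dot_orthonormal {N : ℕ} {ι : Type*} [DecidableEq ι] [Fintype ι] (w : ι → Fin N → ℂ)
    (hw : ∀ σ τ, star (w σ) ⬝ᵥ w τ = if σ = τ then 1 else 0) :
    Fintype.card ι ≤ N := by
  have h := (orthonormal_of_dot w hw).linearIndependent
  have h2 := h.fintype_card_le_finrank
  rwa [finrank_euclideanSpace_fin] at h2

lemma exists_unitary_cols {N : ℕ} {ι : Type*} [DecidableEq ι] [Fintype ι] (pos : ι → Fin N)
    (hpos : Function.Injective pos) (w : ι → Fin N → ℂ)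
    (hw : ∀ σ τ, star (w σ) ⬝ᵥ w τ = if σ = τ then 1 else 0) :
    ∃ U ∈ Matrix.unitaryGroup (Fin N) ℂ, ∀ σ a, U a (pos σ) = w σ a := by
  classical
  let v : Fin N → EuclideanSpace ℂ (Fin N) := fun a =>
    if h : ∃ σ, pos σ = a then (WithLp.equiv 2 (Fin N → ℂ)).symm (w h.choose) else 0
  have hv : ∀ σ, v (pos σ) = (WithLp.equiv 2 (Fin N → ℂ)).symm (w σ) := by
    intro σ
    have h : ∃ τ, pos τ = pos σ := ⟨σ, rfl⟩
    simp only [v, dif_pos h]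
    exact congrArg _ (congrArg w (hpos h.choose_spec))
  have horth : Orthonormal ℂ ((Set.range pos).restrict v) := by
    rw [orthonormal_iff_ite]
    rintro ⟨a, σ, rfl⟩ ⟨b, τ, rfl⟩
    show inner ℂ (v (pos σ)) (v (pos τ)) = _
    rw [hv σ, hv τ]
    rw [WithLp.equiv_symm_apply, EuclideanSpace.inner_toLp_toLp, dotProduct_comm, hw σ τ]
    by_cases h : σ = τ
    · subst h; simp
    · have : pos σ ≠ pos τ := fun hc => h (hpos hc)
      simp [h, Subtype.ext_iff, this]
  obtain ⟨b, hb⟩ := horth.exists_orthonormalBasis_extension_of_card_eq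
    (by rw [finrank_euclideanSpace_fin, Fintype.card_fin])
  refine ⟨Matrix.of (fun a c => (WithLp.equiv 2 (Fin N → ℂ)) (b c) a), ?_, ?_⟩
  · rw [Matrix.mem_unitaryGroup_iff']
    ext c c'
    have hbo := (orthonormal_iff_ite.mp b.orthonormal) c c'
    rw [EuclideanSpace.inner_eq_star_dotProduct] at hbo
    simp only [Matrix.mul_apply, Matrix.star_apply, Matrix.of_apply, Matrix.one_apply]
    rw [← hbo]
    simp [dotProduct, mul_comm]
  · intro σ a
    simp only [Matrix.of_apply]
    rw [hb (pos σ) ⟨σ, rfl⟩, hv σ]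
    rfl

lemma diagPadAt_zero {n m : ℕ} (N M R C k : ℕ) :
    diagPadAt N M R C k (0 : Matrix (Fin n) (Fin m) ℂ) = 0 := by
  ext a b; simp [diagPadAt]

lemma diagPadAt_add {n m : ℕ} (N M R C k : ℕ) (A B : Matrix (Fin n) (Fin m) ℂ) :
    diagPadAt N M R C k (A + B) = diagPadAt N M R C k A + diagPadAt N M R C k B := by
  ext a b
  simp only [diagPadAt, of_apply, Matrix.add_apply]
  split_ifs <;> simp

lemma diagPadAt_smul {n m : ℕ} (N M R C k : ℕ) (z : ℂ) (A : Matrix (Fin n) (Fin m) ℂ) :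
    diagPadAt N M R C k (z • A) = z • diagPadAt N M R C k A := by
  ext a b
  simp only [diagPadAt, of_apply, Matrix.smul_apply, smul_eq_mul]
  split_ifs <;> simp

lemma diagPadAt_stdBasisMatrix {n m : ℕ} (N M R C α : ℕ) (r : Fin n) (c : Fin m)
    (hN : R + α * n ≤ N) (hM : C + α * m ≤ M) :
    diagPadAt N M R C α (Matrix.single r c (1:ℂ)) =
      ∑ t : Fin α, Matrix.single
        (⟨R + t * n + r, by nlinarith [t.isLt, r.isLt]⟩ : Fin N)
        (⟨C + t * m + c, by nlinarith [t.isLt, c.isLt]⟩ : Fin M) 1 := by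
  have hn : 0 < n := r.pos
  have hm : 0 < m := c.pos
  ext a b
  rw [Matrix.sum_apply]
  simp only [diagPadAt, of_apply, Matrix.single, Fin.ext_iff]
  by_cases hex : ∃ t : Fin α, (a : ℕ) = R + t * n + r ∧ (b : ℕ) = C + t * m + c
  · obtain ⟨t, ht1, ht2⟩ := hex
    have hmodn : ((a : ℕ) - R) % n = r := by
      rw [ht1, show R + ↑t * n + ↑r - R = ↑r + ↑t * n by omega,
        Nat.add_mul_mod_self_right, Nat.mod_eq_of_lt r.isLt]
    have hmodm : ((b : ℕ) - C) % m = c := by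
      rw [ht2, show C + ↑t * m + ↑c - C = ↑c + ↑t * m by omega,
        Nat.add_mul_mod_self_right, Nat.mod_eq_of_lt c.isLt]
    have hdivn : ((a : ℕ) - R) / n = t := by
      rw [ht1, show R + ↑t * n + ↑r - R = n * ↑t + ↑r by ring_nf; omega,
        Nat.mul_add_div hn, Nat.div_eq_of_lt r.isLt, add_zero]
    have hdivm : ((b : ℕ) - C) / m = t := by
      rw [ht2, show C + ↑t * m + ↑c - C = m * ↑t + ↑c by ring_nf; omega,
        Nat.mul_add_div hm, Nat.div_eq_of_lt c.isLt, add_zero]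
    have hcond : R ≤ (a : ℕ) ∧ C ≤ (b : ℕ) ∧ ((a : ℕ) - R) % n < n ∧ ((b : ℕ) - C) % m < m ∧
        (a : ℕ) - R < α * n ∧ (b : ℕ) - C < α * m ∧ ((a : ℕ) - R) / n = ((b : ℕ) - C) / m := by
      refine ⟨by omega, by omega, by omega, by omega, ?_, ?_, by rw [hdivn, hdivm]⟩
      · have : (a : ℕ) - R = ↑t * n + ↑r := by omega
        nlinarith [t.isLt, r.isLt]
      · have : (b : ℕ) - C = ↑t * m + ↑c := by omega
        nlinarith [t.isLt, c.isLt]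
    rw [dif_pos hcond, Finset.sum_eq_single t]
    · rw [if_pos ⟨hmodn.symm, hmodm.symm⟩, if_pos ⟨ht1.symm, ht2.symm⟩]
    · intro t' _ htne
      rw [if_neg]
      rintro ⟨h1, h2⟩
      apply htne
      have : (t' : ℕ) * n = (t : ℕ) * n := by omega
      exact Fin.ext (Nat.eq_of_mul_eq_mul_right hn this)
    · intro h; exact absurd (Finset.mem_univ t) h
  · have hz : ∀ t ∈ (Finset.univ : Finset (Fin α)),
        (if R + (t : ℕ) * n + ↑r = ↑a ∧ C + (t : ℕ) * m + ↑c = ↑b then (1:ℂ) else 0) = 0 := by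
      intro t _
      rw [if_neg]
      rintro ⟨h1, h2⟩
      exact hex ⟨t, h1.symm, h2.symm⟩
    rw [Finset.sum_eq_zero hz]
    split_ifs with hcond hval
    · exfalso
      apply hex
      obtain ⟨hval1, hval2⟩ := hval
      have htlt : ((a : ℕ) - R) / n < α := (Nat.div_lt_iff_lt_mul hn).mpr hcond.2.2.2.2.1
      have hdm := Nat.div_add_mod ((a : ℕ) - R) n
      have hdm2 := Nat.div_add_mod ((b : ℕ) - C) m
      have e3 : R + ((a : ℕ) - R) = (a : ℕ) := Nat.add_sub_cancel' hcond.1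
      have e4 : C + ((b : ℕ) - C) = (b : ℕ) := Nat.add_sub_cancel' hcond.2.1
      refine ⟨⟨((a : ℕ) - R) / n, htlt⟩, ?_, ?_⟩
      · calc (a : ℕ) = R + ((a : ℕ) - R) := e3.symm
          _ = R + (n * (((a : ℕ) - R) / n) + ((a : ℕ) - R) % n) := by rw [hdm]
          _ = R + (((a : ℕ) - R) / n) * n + ↑r := by rw [← hval1]; ring
      · calc (b : ℕ) = C + ((b : ℕ) - C) := e4.symm
          _ = C + (m * (((b : ℕ) - C) / m) + ((b : ℕ) - C) % m) := by rw [hdm2]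
          _ = C + (((a : ℕ) - R) / n) * m + ↑c := by
              rw [← hval2, hcond.2.2.2.2.2.2]; ring
    · rfl
    · rfl

lemma stdBM_mul_same {A B C : ℕ} (i : Fin A) (j : Fin B) (k : Fin C) :
    Matrix.single i j (1:ℂ) * Matrix.single j k (1:ℂ) = Matrix.single i k 1 := by
  ext a b
  simp only [mul_apply, Matrix.single, of_apply, boole_mul]
  by_cases h₁ : i = a <;> by_cases h₂ : k = b <;> simp [h₁, h₂]

lemma stdBM_mul_of_ne {A B C : ℕ} (i : Fin A) {j k : Fin B} {l : Fin C} (h : j ≠ k) :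
    Matrix.single i j (1:ℂ) * Matrix.single k l (1:ℂ) = 0 := by
  ext a b
  simp only [mul_apply, boole_mul, Matrix.single, of_apply]
  by_cases h₁ : i = a
  · simp only [h₁, true_and, mul_ite, ite_mul, zero_mul, mul_zero, ← ite_and, Matrix.zero_apply]
    refine Finset.sum_eq_zero (fun x _ => ?_)
    apply if_neg
    rintro ⟨⟨rfl, rfl⟩, h2⟩
    exact h h2.1.symm
  · simp only [h₁, false_and, ite_false, mul_ite, zero_mul, mul_zero, ite_self,
      Finset.sum_const_zero, Matrix.zero_apply]

lemma sum_mulVec' {ι : Type*} (s : Finset ι) {K L : ℕ} (M : ι → Matrix (Fin K) (Fin L) ℂ)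
    (v : Fin L → ℂ) : (∑ i ∈ s, M i) *ᵥ v = ∑ i ∈ s, M i *ᵥ v := by
  ext a
  simp only [mulVec, dotProduct, Finset.sum_apply, Matrix.sum_apply, Finset.sum_mul]
  rw [Finset.sum_comm]

lemma star_single_one {N : ℕ} (b : Fin N) :
    star (Pi.single b (1:ℂ) : Fin N → ℂ) = Pi.single b 1 := by
  funext a
  by_cases hb : a = b <;> simp [Pi.single_apply, hb, apply_ite (star : ℂ → ℂ)]

lemma off_le {p : ℕ} (g : Fin p → ℕ) (i : Fin p) :
    (∑ i' ∈ Finset.Iio i, g i') + g i ≤ ∑ i', g i' := by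
  have h1 : (∑ i' ∈ Finset.Iio i, g i') + g i = ∑ i' ∈ Finset.Iic i, g i' := by
    rw [show Finset.Iic i = insert i (Finset.Iio i) from (Finset.Iio_insert i).symm,
      Finset.sum_insert (by simp), add_comm]
  rw [h1]
  exact Finset.sum_le_sum_of_subset (Finset.subset_univ _)

lemma off_mono {p : ℕ} (g : Fin p → ℕ) {i i' : Fin p} (h : i < i') :
    (∑ i'' ∈ Finset.Iio i, g i'') + g i ≤ ∑ i'' ∈ Finset.Iio i', g i'' := by
  have h1 : (∑ i'' ∈ Finset.Iio i, g i'') + g i = ∑ i'' ∈ Finset.Iic i, g i'' := by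
    rw [show Finset.Iic i = insert i (Finset.Iio i) from (Finset.Iio_insert i).symm,
      Finset.sum_insert (by simp), add_comm]
  rw [h1]
  refine Finset.sum_le_sum_of_subset ?_
  intro z hz
  rw [Finset.mem_Iic] at hz
  rw [Finset.mem_Iio]
  exact lt_of_le_of_lt hz h

section buildSide
variable {p N : ℕ} (α d : Fin p → ℕ) (y : ∀ i : Fin p, Fin (α i) → Fin (d i) → Fin N → ℂ)

lemma sigma_orth
    (hsame : ∀ i t r t' r', star (y i t r) ⬝ᵥ y i t' r' = if t = t' ∧ r = r' then 1 else 0)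
    (hcross : ∀ i i', i ≠ i' → ∀ t r t' r', star (y i t r) ⬝ᵥ y i' t' r' = 0) :
    ∀ σ τ : (Σ i : Fin p, Fin (α i) × Fin (d i)),
      star (y σ.1 σ.2.1 σ.2.2) ⬝ᵥ y τ.1 τ.2.1 τ.2.2 = if σ = τ then 1 else 0 := by
  rintro ⟨i, t, r⟩ ⟨i', t', r'⟩
  by_cases h : i = i'
  · subst h
    rw [hsame i t r t' r']
    by_cases h2 : t = t' ∧ r = r'
    · obtain ⟨h2a, h2b⟩ := h2
      subst h2a; subst h2b
      simp
    · rw [if_neg h2, if_neg]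
      intro hc
      apply h2
      have h5 := (Sigma.mk.inj_iff.mp hc).2
      have h6 : (t, r) = (t', r') := eq_of_heq h5
      exact ⟨(Prod.ext_iff.mp h6).1, (Prod.ext_iff.mp h6).2⟩
  · rw [hcross i i' h t r t' r', if_neg]
    intro hc
    exact h (Sigma.mk.inj_iff.mp hc).1

lemma card_bound
    (hsame : ∀ i t r t' r', star (y i t r) ⬝ᵥ y i t' r' = if t = t' ∧ r = r' then 1 else 0)
    (hcross : ∀ i i', i ≠ i' → ∀ t r t' r', star (y i t r) ⬝ᵥ y i' t' r' = 0) :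
    ∑ i, α i * d i ≤ N := by
  classical
  have h := card_le_of_dot_orthonormal (fun σ : (Σ i : Fin p, Fin (α i) × Fin (d i)) =>
    y σ.1 σ.2.1 σ.2.2) (sigma_orth α d y hsame hcross)
  simpa [Fintype.card_sigma] using h

lemma build_unitary (hcard : ∑ i, α i * d i ≤ N)
    (hsame : ∀ i t r t' r', star (y i t r) ⬝ᵥ y i t' r' = if t = t' ∧ r = r' then 1 else 0)
    (hcross : ∀ i i', i ≠ i' → ∀ t r t' r', star (y i t r) ⬝ᵥ y i' t' r' = 0) :
    ∃ U ∈ Matrix.unitaryGroup (Fin N) ℂ,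
      ∀ (i : Fin p) (t : Fin (α i)) (r : Fin (d i)) (a : Fin N)
        (h : (∑ i' ∈ Finset.Iio i, α i' * d i') + t * d i + r < N),
        U a ⟨(∑ i' ∈ Finset.Iio i, α i' * d i') + t * d i + r, h⟩ = y i t r a := by
  classical
  have hposlt : ∀ σ : (Σ i : Fin p, Fin (α i) × Fin (d i)),
      (∑ i' ∈ Finset.Iio σ.1, α i' * d i') + σ.2.1 * d σ.1 + σ.2.2 < N := by
    rintro ⟨i, t, r⟩
    have h1 : (t : ℕ) * d i + r < α i * d i := by nlinarith [t.isLt, r.isLt]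
    have h2 := off_le (fun i' => α i' * d i') i
    simp only at h1 h2 ⊢
    linarith
  set pos : (Σ i : Fin p, Fin (α i) × Fin (d i)) → Fin N := fun σ =>
    ⟨(∑ i' ∈ Finset.Iio σ.1, α i' * d i') + σ.2.1 * d σ.1 + σ.2.2, hposlt σ⟩ with hpos
  have hposinj : Function.Injective pos := by
    rintro ⟨i, t, r⟩ ⟨i', t', r'⟩ h
    have hval : (∑ i'' ∈ Finset.Iio i, α i'' * d i'') + (t : ℕ) * d i + r
        = (∑ i'' ∈ Finset.Iio i', α i'' * d i'') + (t' : ℕ) * d i' + r' := congrArg Fin.val h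
    rcases lt_trichotomy i i' with hlt | heq | hgt
    · exfalso
      have h1 : (t : ℕ) * d i + r < α i * d i := by nlinarith [t.isLt, r.isLt]
      have h2 := off_mono (fun i'' => α i'' * d i'') hlt
      have h3 := Nat.zero_le ((t' : ℕ) * d i' + (r' : ℕ))
      linarith
    · subst heq
      have h4 : (t : ℕ) * d i + r = (t' : ℕ) * d i + r' := by omega
      have hdpos : 0 < d i := r.pos
      have htt : t = t' := by
        rcases Nat.lt_trichotomy t t' with h5 | h5 | h5
        · exfalso
          have h6 : ((t : ℕ) + 1) * d i ≤ (t' : ℕ) * d i := Nat.mul_le_mul_right _ h5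
          nlinarith [r.isLt, r'.isLt]
        · exact Fin.ext h5
        · exfalso
          have h6 : ((t' : ℕ) + 1) * d i ≤ (t : ℕ) * d i := Nat.mul_le_mul_right _ h5
          nlinarith [r.isLt, r'.isLt]
      subst htt
      have hrr : r = r' := Fin.ext (by omega)
      subst hrr
      rfl
    · exfalso
      have h1 : (t' : ℕ) * d i' + r' < α i' * d i' := by nlinarith [t'.isLt, r'.isLt]
      have h2 := off_mono (fun i'' => α i'' * d i'') hgt
      have h3 := Nat.zero_le ((t : ℕ) * d i + (r : ℕ))
      linarith
  obtain ⟨U, hU, hUcol⟩ := exists_unitary_cols pos hposinj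
    (fun σ => y σ.1 σ.2.1 σ.2.2) (sigma_orth α d y hsame hcross)
  refine ⟨U, hU, ?_⟩
  intro i t r a h
  have := hUcol ⟨i, t, r⟩ a
  rw [hpos] at this
  exact this

end buildSide

lemma tro_component {p K L : ℕ} (n m : Fin p → ℕ)
    (ψ : (∀ i, Matrix (Fin (n i)) (Fin (m i)) ℂ) →ₗ[ℂ] Matrix (Fin K) (Fin L) ℂ)
    (hψ : ∀ x y z : (∀ i, Matrix (Fin (n i)) (Fin (m i)) ℂ),
      ψ (fun i => x i * (y i)ᴴ * z i) = ψ x * (ψ y)ᴴ * ψ z) :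
    ∃ α : Fin p → ℕ, ((∑ i, α i * n i) ≤ K ∧ (∑ i, α i * m i) ≤ L) ∧
      ∃ U ∈ Matrix.unitaryGroup (Fin K) ℂ, ∃ V ∈ Matrix.unitaryGroup (Fin L) ℂ,
        ∀ A, ψ A = U * (∑ i, diagPadAt K L (∑ i' ∈ Finset.Iio i, α i' * n i')
          (∑ i' ∈ Finset.Iio i, α i' * m i') (α i) (A i)) * V := by
  classical
  set F : ∀ i : Fin p, Fin (n i) → Fin (m i) → Matrix (Fin K) (Fin L) ℂ :=
    fun i r c => ψ (Pi.single i (Matrix.single r c 1)) with hF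
  have hsingle : ∀ (i : Fin p) (X Y Z : Matrix (Fin (n i)) (Fin (m i)) ℂ),
      (fun i₀ => (Pi.single i X : ∀ i₀, Matrix (Fin (n i₀)) (Fin (m i₀)) ℂ) i₀ * ((Pi.single i Y : ∀ i₀, Matrix (Fin (n i₀)) (Fin (m i₀)) ℂ) i₀)ᴴ * (Pi.single i Z : ∀ i₀, Matrix (Fin (n i₀)) (Fin (m i₀)) ℂ) i₀)
        = Pi.single i (X * Yᴴ * Z) := by
    intro i X Y Z
    funext i₀
    by_cases h : i₀ = i
    · subst h; simp
    · simp [Pi.single_eq_of_ne h]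
  have MR1 : ∀ (i : Fin p) (r : Fin (n i)) (c : Fin (m i)) (r' : Fin (n i)) (c' : Fin (m i))
      (r'' : Fin (n i)) (c'' : Fin (m i)),
      F i r c * (F i r' c')ᴴ * F i r'' c'' =
        if c = c' ∧ r' = r'' then F i r c'' else 0 := by
    intro i r c r' c' r'' c''
    rw [hF]
    simp only
    rw [← hψ, hsingle, stdBasisMatrix_conjT]
    by_cases hc : c = c'
    · subst hc
      rw [stdBM_mul_same]
      by_cases hr : r' = r''
      · subst hr
        rw [stdBM_mul_same, if_pos ⟨rfl, rfl⟩]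
      · rw [stdBM_mul_of_ne _ hr, if_neg (by tauto)]
        simp
    · rw [stdBM_mul_of_ne _ hc, Matrix.zero_mul, if_neg (by tauto)]
      simp
  have MR0 : ∀ (i i' i'' : Fin p), (i ≠ i' ∨ i' ≠ i'') →
      ∀ (r : Fin (n i)) (c : Fin (m i)) (r' : Fin (n i')) (c' : Fin (m i'))
        (r'' : Fin (n i'')) (c'' : Fin (m i'')),
      F i r c * (F i' r' c')ᴴ * F i'' r'' c'' = 0 := by
    intro i i' i'' hne r c r' c' r'' c''
    rw [hF]
    simp only
    rw [← hψ]
    have hzero : (fun i₀ => (Pi.single i (Matrix.single r c (1:ℂ)) : ∀ i₀, Matrix (Fin (n i₀)) (Fin (m i₀)) ℂ) i₀ *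
        ((Pi.single i' (Matrix.single r' c' (1:ℂ)) : ∀ i₀, Matrix (Fin (n i₀)) (Fin (m i₀)) ℂ) i₀)ᴴ *
        (Pi.single i'' (Matrix.single r'' c'' (1:ℂ)) : ∀ i₀, Matrix (Fin (n i₀)) (Fin (m i₀)) ℂ) i₀)
        = (0 : ∀ i, Matrix (Fin (n i)) (Fin (m i)) ℂ) := by
      funext i₀
      rcases hne with h | h
      · by_cases h1 : i₀ = i'
        · subst h1
          rw [Pi.single_eq_of_ne (fun hc => h hc.symm)]
          simp
        · rw [Pi.single_eq_of_ne h1]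
          simp
      · by_cases h1 : i₀ = i'
        · subst h1
          rw [Pi.single_eq_of_ne h]
          simp
        · rw [Pi.single_eq_of_ne h1]
          simp
    rw [hzero, map_zero]
  have hper : ∀ i : Fin p, ∃ (α : ℕ) (w : Fin α → Fin (n i) → Fin K → ℂ)
      (x : Fin α → Fin (m i) → Fin L → ℂ),
      (∀ t r t' r', star (w t r) ⬝ᵥ w t' r' = if t = t' ∧ r = r' then 1 else 0) ∧
      (∀ t c t' c', star (x t c) ⬝ᵥ x t' c' = if t = t' ∧ c = c' then 1 else 0) ∧
      (∀ r c, F i r c = ∑ t, vecMulVec (w t r) (star (x t c))) ∧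
      (∀ t r, ∃ (r₀ : Fin (n i)) (c₀ : Fin (m i)) (u : Fin L → ℂ),
        w t r = (F i r c₀ * (F i r₀ c₀)ᴴ * F i r₀ c₀) *ᵥ u) ∧
      (∀ t c, ∃ (r₀ : Fin (n i)) (c₀ : Fin (m i)) (u : Fin L → ℂ),
        x t c = ((F i r₀ c)ᴴ * F i r₀ c₀) *ᵥ u) := by
    intro i
    by_cases hpos : 0 < n i ∧ 0 < m i
    · obtain ⟨hn, hm⟩ := hpos
      set r0 : Fin (n i) := ⟨0, hn⟩ with hr0
      set c0 : Fin (m i) := ⟨0, hm⟩ with hc0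
      have hpar : F i r0 c0 * (F i r0 c0)ᴴ * F i r0 c0 = F i r0 c0 := by
        have h := MR1 i r0 c0 r0 c0 r0 c0
        rw [if_pos ⟨rfl, rfl⟩] at h
        exact h
      have hQH : ((F i r0 c0)ᴴ * F i r0 c0).IsHermitian :=
        isHermitian_conjTranspose_mul_self _
      have hQI : ((F i r0 c0)ᴴ * F i r0 c0) * ((F i r0 c0)ᴴ * F i r0 c0)
          = (F i r0 c0)ᴴ * F i r0 c0 := by
        calc ((F i r0 c0)ᴴ * F i r0 c0) * ((F i r0 c0)ᴴ * F i r0 c0)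
            = (F i r0 c0)ᴴ * (F i r0 c0 * (F i r0 c0)ᴴ * F i r0 c0) := by
              simp only [Matrix.mul_assoc]
          _ = (F i r0 c0)ᴴ * F i r0 c0 := by rw [hpar]
      obtain ⟨α, v, hvorth, hQdec⟩ := herm_idem_decomp _ hQH hQI
      have hQv : ∀ t, ((F i r0 c0)ᴴ * F i r0 c0) *ᵥ v t = v t := by
        intro t
        rw [hQdec]
        have h1 : (∑ s, vecMulVec (v s) (star (v s))) *ᵥ v t
            = ∑ s, (star (v s) ⬝ᵥ v t) • v s := by
          rw [sum_mulVec']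
          exact Finset.sum_congr rfl fun s _ => vecMulVec_mulVec' _ _ _
        rw [h1]
        have h2 : ∀ s, (star (v s) ⬝ᵥ v t) • v s = (if s = t then (1:ℂ) else 0) • v s := by
          intro s; rw [hvorth s t]
        rw [Finset.sum_congr rfl fun s _ => h2 s]
        simp [ite_smul]
      -- key identities
      have keyW : ∀ (r r' : Fin (n i)),
          (F i r c0)ᴴ * F i r' c0 * ((F i r0 c0)ᴴ * F i r0 c0)
            = if r' = r then (F i r0 c0)ᴴ * F i r0 c0 else 0 := by
        intro r r'
        have h2 := MR1 i r0 c0 r' c0 r c0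
        have h3 : (F i r c0)ᴴ * F i r' c0 * (F i r0 c0)ᴴ
            = if r' = r then (F i r0 c0)ᴴ else 0 := by
          calc (F i r c0)ᴴ * F i r' c0 * (F i r0 c0)ᴴ
              = (F i r0 c0 * (F i r' c0)ᴴ * F i r c0)ᴴ := by
                simp only [conjTranspose_mul, conjTranspose_conjTranspose, Matrix.mul_assoc]
            _ = if r' = r then (F i r0 c0)ᴴ else 0 := by
                rw [h2]
                by_cases h : r' = r
                · rw [if_pos ⟨rfl, h⟩, if_pos h]
                · rw [if_neg (by tauto), if_neg h, conjTranspose_zero]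
        calc (F i r c0)ᴴ * F i r' c0 * ((F i r0 c0)ᴴ * F i r0 c0)
            = ((F i r c0)ᴴ * F i r' c0 * (F i r0 c0)ᴴ) * F i r0 c0 := by
              simp only [Matrix.mul_assoc]
          _ = if r' = r then (F i r0 c0)ᴴ * F i r0 c0 else 0 := by
              rw [h3]
              by_cases h : r' = r
              · rw [if_pos h, if_pos h]
              · rw [if_neg h, if_neg h, Matrix.zero_mul]
      have keyX : ∀ (c c' : Fin (m i)),
          ((F i r0 c)ᴴ * F i r0 c0)ᴴ * ((F i r0 c')ᴴ * F i r0 c0)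
            = if c = c' then (F i r0 c0)ᴴ * F i r0 c0 else 0 := by
        intro c c'
        have h2 := MR1 i r0 c r0 c' r0 c0
        calc ((F i r0 c)ᴴ * F i r0 c0)ᴴ * ((F i r0 c')ᴴ * F i r0 c0)
            = (F i r0 c0)ᴴ * ((F i r0 c * (F i r0 c')ᴴ * F i r0 c0)) := by
              simp only [conjTranspose_mul, conjTranspose_conjTranspose, Matrix.mul_assoc]
          _ = if c = c' then (F i r0 c0)ᴴ * F i r0 c0 else 0 := by
              rw [h2]
              by_cases h : c = c'
              · rw [if_pos ⟨h, rfl⟩, if_pos h]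
              · rw [if_neg (by tauto), if_neg h, Matrix.mul_zero]
      refine ⟨α, fun t r => F i r c0 *ᵥ v t,
        fun t c => ((F i r0 c)ᴴ * F i r0 c0) *ᵥ v t, ?_, ?_, ?_, ?_, ?_⟩
      · intro t r t' r'
        rw [star_dot_mulVec]
        conv_lhs => rw [← hQv t', mulVec_mulVec, keyW r r']
        by_cases h : r' = r
        · rw [if_pos h, hQv t', hvorth t t']
          by_cases ht : t = t'
          · simp [ht, h]
          · simp [ht]
        · rw [if_neg h, Matrix.zero_mulVec, dotProduct_zero,
            if_neg (fun hc => h hc.2.symm)]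
      · intro t c t' c'
        rw [star_dot_mulVec, keyX c c']
        by_cases h : c = c'
        · rw [if_pos h, hQv t', hvorth t t']
          by_cases ht : t = t'
          · simp [ht, h]
          · simp [ht]
        · rw [if_neg h, Matrix.zero_mulVec, dotProduct_zero,
            if_neg (fun hc => h hc.2)]
      · intro r c
        have h3 : F i r c = F i r c0 * (F i r0 c0)ᴴ * F i r0 c := by
          have h := MR1 i r c0 r0 c0 r0 c
          rw [if_pos ⟨rfl, rfl⟩] at h
          exact h.symm
        have h4 : (F i r0 c0)ᴴ = (F i r0 c0)ᴴ * F i r0 c0 * (F i r0 c0)ᴴ := by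
          conv_lhs => rw [← hpar]
          simp only [conjTranspose_mul, conjTranspose_conjTranspose, Matrix.mul_assoc]
        rw [h3]
        conv_lhs => rw [h4]
        have h5 : F i r c0 * ((F i r0 c0)ᴴ * F i r0 c0 * (F i r0 c0)ᴴ) * F i r0 c
            = F i r c0 * ((F i r0 c0)ᴴ * F i r0 c0) * ((F i r0 c0)ᴴ * F i r0 c) := by
          simp only [Matrix.mul_assoc]
        rw [h5, hQdec, Matrix.mul_sum, Matrix.sum_mul]
        refine Finset.sum_congr rfl fun t _ => ?_
        rw [mul_vecMulVec_mul']
        congr 1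
        rw [star_mulVec]
        simp only [conjTranspose_mul, conjTranspose_conjTranspose]
      · intro t r
        refine ⟨r0, c0, v t, ?_⟩
        show F i r c0 *ᵥ v t = _
        conv_lhs => rw [← hQv t, mulVec_mulVec]
        simp only [Matrix.mul_assoc]
      · intro t c
        exact ⟨r0, c0, v t, rfl⟩
    · refine ⟨0, fun t => t.elim0, fun t => t.elim0, ?_, ?_, ?_, ?_, ?_⟩
      · intro t; exact t.elim0
      · intro t; exact t.elim0
      · intro r c; exact absurd ⟨r.pos, c.pos⟩ hpos
      · intro t; exact t.elim0
      · intro t; exact t.elim0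
  choose α w x hw hx hdec hwd hxd using hper
  have hwcross : ∀ i i', i ≠ i' → ∀ (t : Fin (α i)) (r : Fin (n i)) (t' : Fin (α i'))
      (r' : Fin (n i')), star (w i t r) ⬝ᵥ w i' t' r' = 0 := by
    intro i i' hne t r t' r'
    obtain ⟨r₀, c₀, u, hu⟩ := hwd i t r
    obtain ⟨r₀', c₀', u', hu'⟩ := hwd i' t' r'
    rw [hu, hu', star_dot_mulVec]
    have h1 : F i' r₀' c₀' * (F i' r' c₀')ᴴ * F i r c₀ = 0 :=
      MR0 i' i' i (Or.inr (Ne.symm hne)) _ _ _ _ _ _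
    have h2 : (F i r c₀)ᴴ * (F i' r' c₀' * (F i' r₀' c₀')ᴴ) = 0 := by
      calc (F i r c₀)ᴴ * (F i' r' c₀' * (F i' r₀' c₀')ᴴ)
          = (F i' r₀' c₀' * (F i' r' c₀')ᴴ * F i r c₀)ᴴ := by
            simp only [conjTranspose_mul, conjTranspose_conjTranspose, Matrix.mul_assoc]
        _ = 0 := by rw [h1, conjTranspose_zero]
    have h3 : (F i r c₀ * (F i r₀ c₀)ᴴ * F i r₀ c₀)ᴴ *
        (F i' r' c₀' * (F i' r₀' c₀')ᴴ * F i' r₀' c₀') = 0 := by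
      calc (F i r c₀ * (F i r₀ c₀)ᴴ * F i r₀ c₀)ᴴ *
          (F i' r' c₀' * (F i' r₀' c₀')ᴴ * F i' r₀' c₀')
          = (F i r₀ c₀)ᴴ * (F i r₀ c₀ *
              (((F i r c₀)ᴴ * (F i' r' c₀' * (F i' r₀' c₀')ᴴ)) * F i' r₀' c₀')) := by
            simp only [conjTranspose_mul, conjTranspose_conjTranspose, Matrix.mul_assoc]
        _ = 0 := by rw [h2, Matrix.zero_mul, Matrix.mul_zero, Matrix.mul_zero]
    rw [h3, Matrix.zero_mulVec, dotProduct_zero]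
  have hxcross : ∀ i i', i ≠ i' → ∀ (t : Fin (α i)) (c : Fin (m i)) (t' : Fin (α i'))
      (c' : Fin (m i')), star (x i t c) ⬝ᵥ x i' t' c' = 0 := by
    intro i i' hne t c t' c'
    obtain ⟨r₀, c₀, u, hu⟩ := hxd i t c
    obtain ⟨r₀', c₀', u', hu'⟩ := hxd i' t' c'
    rw [hu, hu', star_dot_mulVec]
    have h1 : F i r₀ c * (F i' r₀' c')ᴴ * F i' r₀' c₀' = 0 :=
      MR0 i i' i' (Or.inl hne) _ _ _ _ _ _
    have h3 : ((F i r₀ c)ᴴ * F i r₀ c₀)ᴴ * ((F i' r₀' c')ᴴ * F i' r₀' c₀') = 0 := by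
      calc ((F i r₀ c)ᴴ * F i r₀ c₀)ᴴ * ((F i' r₀' c')ᴴ * F i' r₀' c₀')
          = (F i r₀ c₀)ᴴ * (F i r₀ c * (F i' r₀' c')ᴴ * F i' r₀' c₀') := by
            simp only [conjTranspose_mul, conjTranspose_conjTranspose, Matrix.mul_assoc]
        _ = 0 := by rw [h1, Matrix.mul_zero]
    rw [h3, Matrix.zero_mulVec, dotProduct_zero]
  have hcardK : ∑ i, α i * n i ≤ K := card_bound α n w hw hwcross
  have hcardL : ∑ i, α i * m i ≤ L := card_bound α m x hx hxcross
  obtain ⟨U, hU, hUcol⟩ := build_unitary α n w hcardK hw hwcross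
  obtain ⟨Wm, hWm, hWcol⟩ := build_unitary α m x hcardL hx hxcross
  have hVmem : Wmᴴ ∈ Matrix.unitaryGroup (Fin L) ℂ := by
    rw [← Matrix.star_eq_conjTranspose]
    exact Unitary.star_mem hWm
  refine ⟨α, ⟨hcardK, hcardL⟩, U, hU, Wmᴴ, hVmem, ?_⟩
  have hoffK : ∀ i, (∑ i' ∈ Finset.Iio i, α i' * n i') + α i * n i ≤ K :=
    fun i => le_trans (off_le (fun i' => α i' * n i') i) hcardK
  have hoffL : ∀ i, (∑ i' ∈ Finset.Iio i, α i' * m i') + α i * m i ≤ L :=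
    fun i => le_trans (off_le (fun i' => α i' * m i') i) hcardL
  let D : (∀ i, Matrix (Fin (n i)) (Fin (m i)) ℂ) →ₗ[ℂ] Matrix (Fin K) (Fin L) ℂ :=
    { toFun := fun A => U * (∑ i, diagPadAt K L (∑ i' ∈ Finset.Iio i, α i' * n i')
          (∑ i' ∈ Finset.Iio i, α i' * m i') (α i) (A i)) * Wmᴴ
      map_add' := by
        intro A B
        simp only [Pi.add_apply, diagPadAt_add, Finset.sum_add_distrib, Matrix.mul_add,
          Matrix.add_mul]
      map_smul' := by
        intro z A
        simp only [Pi.smul_apply, diagPadAt_smul, ← Finset.smul_sum, RingHom.id_apply,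
          Matrix.mul_smul, Matrix.smul_mul] }
  have hψD : ψ = D := by
    apply Module.Basis.ext (Pi.basis fun i => Matrix.stdBasis ℂ (Fin (n i)) (Fin (m i)))
    rintro ⟨i, r, c⟩
    rw [Pi.basis_apply, Matrix.stdBasis_eq_single]
    show F i r c = U * (∑ i', diagPadAt K L (∑ i'' ∈ Finset.Iio i', α i'' * n i'')
        (∑ i'' ∈ Finset.Iio i', α i'' * m i'') (α i')
        ((Pi.single i (Matrix.single r c 1) : ∀ i₀, Matrix (Fin (n i₀)) (Fin (m i₀)) ℂ) i'))
        * Wmᴴ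
    have hsum : (∑ i', diagPadAt K L (∑ i'' ∈ Finset.Iio i', α i'' * n i'')
        (∑ i'' ∈ Finset.Iio i', α i'' * m i'') (α i')
        ((Pi.single i (Matrix.single r c 1) : ∀ i₀, Matrix (Fin (n i₀)) (Fin (m i₀)) ℂ) i'))
        = diagPadAt K L (∑ i'' ∈ Finset.Iio i, α i'' * n i'')
          (∑ i'' ∈ Finset.Iio i, α i'' * m i'') (α i) (Matrix.single r c 1) := by
      rw [Finset.sum_eq_single i]
      · rw [Pi.single_eq_same]
      · intro i' _ hne
        rw [Pi.single_eq_of_ne hne, diagPadAt_zero]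
      · intro hmem
        exact absurd (Finset.mem_univ i) hmem
    rw [hsum, diagPadAt_stdBasisMatrix K L _ _ (α i) r c (hoffK i) (hoffL i),
      Matrix.mul_sum, Matrix.sum_mul, hdec i r c]
    refine Finset.sum_congr rfl fun t _ => ?_
    rw [Matrix.single_eq_single_vecMulVec_single, mul_vecMulVec_mul']
    have hA : (U *ᵥ Pi.single (⟨(∑ i'' ∈ Finset.Iio i, α i'' * n i'') + ↑t * n i + ↑r,
        by nlinarith [t.isLt, r.isLt, hoffK i]⟩ : Fin K) (1:ℂ)) = w i t r := by
      funext s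
      simp only [Matrix.mulVec_single, mul_one, MulOpposite.op_one, one_smul, Matrix.col_apply]
      exact hUcol i t r s _
    have hB : (Pi.single (⟨(∑ i'' ∈ Finset.Iio i, α i'' * m i'') + ↑t * m i + ↑c,
        by nlinarith [t.isLt, c.isLt, hoffL i]⟩ : Fin L) (1:ℂ)) ᵥ* Wmᴴ = star (x i t c) := by
      rw [← star_single_one, ← star_mulVec]
      funext s
      simp only [Pi.star_apply, Matrix.mulVec_single, mul_one, MulOpposite.op_one, one_smul, Matrix.col_apply]
      rw [hWcol i t c s _]
    rw [hA, hB]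
  intro A
  rw [hψD]
  rfl

/-- every TRO-morphism between finite direct sums of rectangular matrix
spaces is, componentwise and up to unitaries, determined by a multiplicity matrix of
natural numbers, acting as a padded block-diagonal embedding. -/
theorem tro_morphism_direct_sum_standard_form (p q : ℕ)
    (n m : Fin p → ℕ) (k l : Fin q → ℕ)
    (φ : (∀ i, Matrix (Fin (n i)) (Fin (m i)) ℂ) →ₗ[ℂ]
          (∀ j, Matrix (Fin (k j)) (Fin (l j)) ℂ))
    (hφ : ∀ x y z : (∀ i, Matrix (Fin (n i)) (Fin (m i)) ℂ),
      φ (fun i => x i * (y i)ᴴ * z i) = fun j => φ x j * (φ y j)ᴴ * φ z j) :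
    ∃ α : Fin q → Fin p → ℕ,
      (∀ j, (∑ i, α j i * n i) ≤ k j ∧ (∑ i, α j i * m i) ≤ l j) ∧
      ∀ j, ∃ U ∈ Matrix.unitaryGroup (Fin (k j)) ℂ, ∃ V ∈ Matrix.unitaryGroup (Fin (l j)) ℂ,
        ∀ A : (∀ i, Matrix (Fin (n i)) (Fin (m i)) ℂ),
          φ A j = U * (∑ i, diagPadAt (k j) (l j)
              (∑ i' ∈ Finset.Iio i, α j i' * n i')
              (∑ i' ∈ Finset.Iio i, α j i' * m i')
              (α j i) (A i)) * V := by
  have hmain : ∀ j : Fin q, ∃ α : Fin p → ℕ,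
      ((∑ i, α i * n i) ≤ k j ∧ (∑ i, α i * m i) ≤ l j) ∧
      ∃ U ∈ Matrix.unitaryGroup (Fin (k j)) ℂ, ∃ V ∈ Matrix.unitaryGroup (Fin (l j)) ℂ,
        ∀ A, φ A j = U * (∑ i, diagPadAt (k j) (l j) (∑ i' ∈ Finset.Iio i, α i' * n i')
          (∑ i' ∈ Finset.Iio i, α i' * m i') (α i) (A i)) * V := by
    intro j
    have hψ : ∀ x y z : (∀ i, Matrix (Fin (n i)) (Fin (m i)) ℂ),
        ((LinearMap.proj j).comp φ) (fun i => x i * (y i)ᴴ * z i)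
          = ((LinearMap.proj j).comp φ) x * (((LinearMap.proj j).comp φ) y)ᴴ
            * ((LinearMap.proj j).comp φ) z := by
      intro x y z
      have h := congrFun (hφ x y z) j
      simpa using h
    exact tro_component n m ((LinearMap.proj j).comp φ) hψ
  choose α hα using hmain
  exact ⟨α, fun j => (hα j).1, fun j => (hα j).2⟩
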